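/- Fix s ≥ 0, n > s, and a function F from words over {α, β} of length n - s to the nonnegative rationals. Suppose: (1) F(v) = F(f(v)) for every v, where f(v) changes all non-trailing β's of v into α's; and (2) for every b with 0 ≤ b ≤ n - s, Σ_{v ∈ E_b} F(v) = C(n, b) · F(e^{(0)}), where E_b is the set of words of length n - s with exactly b β's and e^{(b)} is the sorted word α^{n-s-b}β^b. Then for every b with 0 ≤ b ≤ n - s, F(e^{(b)}) = C(s + b, s) · F(e^{(0)}). -/

import Mathlib

/-- `f v` changes all non-trailing β's (`true`s) of `v` into α's (`false`s):
position `i` keeps a β exactly when all letters from `i` on are β. -/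
def collapseNonTrailing {L : ℕ} (v : Fin L → Bool) : Fin L → Bool :=
  fun i => decide (∀ j : Fin L, i ≤ j → v j = true)

/-- The sorted word `e^{(b)} = α^{L-b} β^b` of length `L`. -/
def sortedBetaWord (L b : ℕ) : Fin L → Bool := fun i => decide (L - b ≤ (i : ℕ))

open Finset

namespace Stmt10Aux
variable {L : ℕ}

/-- number of trailing `true`s -/
def tc (v : Fin L → Bool) : ℕ := #(univ.filter fun i : Fin L => ∀ j, i ≤ j → v j = true)

lemma card_filter_le (L m : ℕ) :
    #((univ : Finset (Fin L)).filter fun i : Fin L => m ≤ (i : ℕ)) = L - m := by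
  rcases lt_or_ge m L with h | h
  · have : ((univ : Finset (Fin L)).filter fun i : Fin L => m ≤ (i : ℕ)) = Ici ⟨m, h⟩ := by
      ext i; simp [Fin.le_def]
    rw [this, Fin.card_Ici]
  · have : ((univ : Finset (Fin L)).filter fun i : Fin L => m ≤ (i : ℕ)) = ∅ := by
      ext i; simp only [mem_filter, mem_univ, true_and, notMem_empty, iff_false, not_le]
      exact lt_of_lt_of_le i.isLt h
    rw [this]; simp; omega

lemma card_filter_lt (L m : ℕ) (h : m ≤ L) :
    #((univ : Finset (Fin L)).filter fun i : Fin L => (i : ℕ) < m) = m := by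
  have h1 : ((univ : Finset (Fin L)).filter fun i : Fin L => (i : ℕ) < m)
      = ((univ : Finset (Fin L)).filter fun i : Fin L => ¬ (m ≤ (i : ℕ))) := by
    apply filter_congr; intro i _; simp [not_le]
  rw [h1, filter_not, card_sdiff_of_subset (filter_subset _ _), card_filter_le, card_univ,
    Fintype.card_fin]
  omega

lemma tc_le (v : Fin L → Bool) : tc v ≤ L := by
  have := card_le_univ (univ.filter fun i : Fin L => ∀ j, i ≤ j → v j = true)
  simpa [tc] using this

lemma filter_tc_eq (v : Fin L → Bool) :
    (univ.filter fun i : Fin L => ∀ j, i ≤ j → v j = true)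
      = univ.filter fun i : Fin L => L - tc v ≤ (i : ℕ) := by
  apply eq_of_subset_of_card_le
  · intro i hi
    simp only [mem_filter, mem_univ, true_and] at hi ⊢
    have h1 : Ici i ⊆ univ.filter fun i : Fin L => ∀ j, i ≤ j → v j = true := by
      intro j hj
      simp only [mem_Ici] at hj
      simp only [mem_filter, mem_univ, true_and]
      intro k hk; exact hi k (le_trans hj hk)
    have h2 := card_le_card h1
    rw [Fin.card_Ici] at h2
    have h3 := i.isLt
    unfold tc
    omega
  · rw [card_filter_le]
    have := tc_le v
    unfold tc at *
    omega

lemma tc_true (v : Fin L → Bool) {i : Fin L} (h : L - tc v ≤ (i : ℕ)) : v i = true := by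
  have h2 := Finset.ext_iff.mp (filter_tc_eq v) i
  simp only [mem_filter, mem_univ, true_and] at h2
  exact (h2.mpr h) i le_rfl


lemma collapse_eq (v : Fin L → Bool) : collapseNonTrailing v = sortedBetaWord L (tc v) := by
  funext i
  simp only [collapseNonTrailing, sortedBetaWord]
  rw [decide_eq_decide]
  have h2 := Finset.ext_iff.mp (filter_tc_eq v) i
  simpa using h2

lemma tc_le_card (v : Fin L → Bool) : tc v ≤ #(univ.filter fun i : Fin L => v i = true) := by
  apply card_le_card
  intro i hi
  simp only [mem_filter, mem_univ, true_and] at hi ⊢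
  exact hi i le_rfl

lemma tc_eq_iff (v : Fin L → Bool) (t : ℕ) (ht : t < L) :
    tc v = t ↔ ((∀ i : Fin L, L - t ≤ (i : ℕ) → v i = true)
      ∧ v ⟨L - 1 - t, by omega⟩ = false) := by
  constructor
  · rintro rfl
    refine ⟨fun i hi => tc_true v hi, ?_⟩
    by_contra hfalse
    have hvt : v ⟨L - 1 - tc v, by omega⟩ = true := by
      cases h : v ⟨L - 1 - tc v, by omega⟩
      · exact absurd h hfalse
      · rfl
    have hmem : (⟨L - 1 - tc v, by omega⟩ : Fin L)
        ∈ univ.filter fun i : Fin L => ∀ j, i ≤ j → v j = true := by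
      simp only [mem_filter, mem_univ, true_and]
      intro j hj
      rw [Fin.le_def] at hj
      simp only at hj
      rcases eq_or_lt_of_le hj with heq | hlt
      · have : j = ⟨L - 1 - tc v, by omega⟩ := by
          apply Fin.ext; simp [← heq]
        rw [this]; exact hvt
      · exact tc_true v (by omega)
    rw [filter_tc_eq v] at hmem
    simp only [mem_filter, mem_univ, true_and] at hmem
    omega
  · rintro ⟨h1, h2⟩
    have hS : (univ.filter fun i : Fin L => ∀ j, i ≤ j → v j = true)
        = univ.filter fun i : Fin L => L - t ≤ (i : ℕ) := by
      ext i
      simp only [mem_filter, mem_univ, true_and]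
      constructor
      · intro hp
        by_contra hc
        have hile : i ≤ (⟨L - 1 - t, by omega⟩ : Fin L) := by
          rw [Fin.le_def]; simp; omega
        have := hp _ hile
        rw [h2] at this
        exact Bool.false_ne_true this
      · intro hi j hj
        rw [Fin.le_def] at hj
        exact h1 j (by omega)
    unfold tc
    rw [hS, card_filter_le]
    omega

lemma card_true_split (v : Fin L → Bool) (m : ℕ) :
    #(univ.filter fun i : Fin L => v i = true)
      = #(univ.filter fun i : Fin L => v i = true ∧ (i : ℕ) < m)
        + #(univ.filter fun i : Fin L => v i = true ∧ m ≤ (i : ℕ)) := by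
  rw [← Finset.card_filter_add_card_filter_not
      (s := univ.filter fun i : Fin L => v i = true) (p := fun i => (i : ℕ) < m),
    filter_filter, filter_filter]
  congr 1
  apply congrArg; apply filter_congr; intro i _; simp [not_lt]


lemma card_fiber (b t : ℕ) (htb : t ≤ b) (hb : b < L) :
    #((univ : Finset (Fin L → Bool)).filter fun v =>
        #(univ.filter fun i : Fin L => v i = true) = b ∧ tc v = t)
      = (L - 1 - t).choose (b - t) := by
  have ht : t < L := lt_of_le_of_lt htb hb
  set m := L - 1 - t with hm
  have hmt : m + 1 = L - t := by omega
  have hcond : ((univ : Finset (Fin L → Bool)).filter fun v =>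
        #(univ.filter fun i : Fin L => v i = true) = b ∧ tc v = t)
      = (univ : Finset (Fin L → Bool)).filter fun v =>
        #(univ.filter fun i : Fin L => v i = true) = b
          ∧ (∀ i : Fin L, L - t ≤ (i : ℕ) → v i = true) ∧ v ⟨m, by omega⟩ = false := by
    apply filter_congr
    intro v _
    rw [tc_eq_iff v t ht]
  rw [hcond]
  conv_rhs => rw [← card_filter_lt L m (by omega),
    ← Finset.card_powersetCard (b - t) ((univ : Finset (Fin L)).filter fun i : Fin L => (i : ℕ) < m)]
  apply Finset.card_nbij' (fun v => univ.filter fun i : Fin L => v i = true ∧ (i : ℕ) < m)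
    (fun S => fun i : Fin L => if (i : ℕ) < m then decide (i ∈ S) else decide (L - t ≤ (i : ℕ)))
  · -- forward maps into powersetCard
    intro v hv
    simp only [mem_coe, mem_filter, mem_univ, true_and] at hv
    obtain ⟨hcard, htail, hfalse⟩ := hv
    rw [mem_coe, mem_powersetCard]
    constructor
    · intro i hi
      simp only [mem_filter, mem_univ, true_and] at hi ⊢
      exact hi.2
    · have hsplit := card_true_split v m
      have hge : (univ.filter fun i : Fin L => v i = true ∧ m ≤ (i : ℕ))
          = univ.filter fun i : Fin L => L - t ≤ (i : ℕ) := by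
        ext i
        simp only [mem_filter, mem_univ, true_and]
        constructor
        · rintro ⟨hvi, hmi⟩
          rcases eq_or_lt_of_le hmi with heq | hlt
          · exfalso
            have : i = ⟨m, by omega⟩ := by apply Fin.ext; simp [← heq]
            rw [this, hfalse] at hvi
            exact Bool.false_ne_true hvi
          · omega
        · intro hi
          exact ⟨htail i hi, by omega⟩
      rw [hge, card_filter_le] at hsplit
      beta_reduce
      omega
  · -- backward maps into filter
    intro S hS
    rw [mem_coe, mem_powersetCard] at hS
    obtain ⟨hsub, hcardS⟩ := hS
    have hSlt : ∀ i : Fin L, i ∈ S → (i : ℕ) < m := by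
      intro i hi
      have := hsub hi
      simpa using this
    simp only [mem_coe, mem_filter, mem_univ, true_and]
    refine ⟨?_, ?_, ?_⟩
    · rw [card_true_split _ m]
      have h1 : (univ.filter fun i : Fin L =>
          (if (i : ℕ) < m then decide (i ∈ S) else decide (L - t ≤ (i : ℕ))) = true
            ∧ (i : ℕ) < m) = S := by
        ext i
        simp only [mem_filter, mem_univ, true_and]
        constructor
        · rintro ⟨hvi, hlt⟩
          rw [if_pos hlt] at hvi
          simpa using hvi
        · intro hi
          have hlt := hSlt i hi
          refine ⟨?_, hlt⟩
          rw [if_pos hlt]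
          simpa using hi
      have h2 : (univ.filter fun i : Fin L =>
          (if (i : ℕ) < m then decide (i ∈ S) else decide (L - t ≤ (i : ℕ))) = true
            ∧ m ≤ (i : ℕ)) = univ.filter fun i : Fin L => L - t ≤ (i : ℕ) := by
        ext i
        simp only [mem_filter, mem_univ, true_and]
        constructor
        · rintro ⟨hvi, hmi⟩
          rw [if_neg (by omega)] at hvi
          simpa using hvi
        · intro hi
          refine ⟨?_, by omega⟩
          rw [if_neg (by omega)]
          simpa using hi
      rw [h1, h2, card_filter_le, hcardS]
      omega
    · intro i hi
      rw [if_neg (by omega)]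
      simpa using hi
    · rw [if_neg (show ¬ (m < m) by omega)]
      simp
      omega
  · -- left inverse
    intro v hv
    simp only [mem_coe, mem_filter, mem_univ, true_and] at hv
    obtain ⟨hcard, htail, hfalse⟩ := hv
    funext i
    beta_reduce
    by_cases hlt : (i : ℕ) < m
    · rw [if_pos hlt]
      simp only [mem_filter, mem_univ, true_and]
      cases h : v i
      · simp [h, hlt]
      · simp [h, hlt]
    · rw [if_neg hlt]
      rcases eq_or_lt_of_le (not_lt.mp hlt) with heq | hgt
      · have : i = ⟨m, by omega⟩ := by apply Fin.ext; simp [← heq]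
        rw [this, hfalse]
        simp
        omega
      · rw [htail i (by omega)]
        simp
        omega
  · -- right inverse
    intro S hS
    rw [mem_coe, mem_powersetCard] at hS
    obtain ⟨hsub, hcardS⟩ := hS
    have hSlt : ∀ i : Fin L, i ∈ S → (i : ℕ) < m := by
      intro i hi
      have := hsub hi
      simpa using this
    ext i
    simp only [mem_filter, mem_univ, true_and]
    constructor
    · rintro ⟨hvi, hlt⟩
      rw [if_pos hlt] at hvi
      simpa using hvi
    · intro hi
      have hlt := hSlt i hi
      refine ⟨?_, hlt⟩
      rw [if_pos hlt]
      simpa using hi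


lemma hockey (m k : ℕ) :
    ∑ t ∈ range (k + 1), (m + t).choose m = (m + k + 1).choose (m + 1) := by
  have h : ∑ t ∈ range (k + 1), (m + t).choose m = ∑ i ∈ Icc m (m + k), i.choose m := by
    apply Finset.sum_nbij' (fun t => m + t) (fun i => i - m)
    · intro a ha; rw [mem_range] at ha; rw [mem_Icc]; omega
    · intro a ha; rw [mem_Icc] at ha; rw [mem_range]; omega
    · intro a _; omega
    · intro a ha; rw [mem_Icc] at ha; omega
    · intro a _; rfl
  rw [h, Nat.sum_Icc_choose]

lemma sym_id : ∀ b s m : ℕ,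
    ∑ t ∈ range (b + 1), (m + t).choose t * (s + (b - t)).choose (b - t)
      = (m + s + b + 1).choose b := by
  intro b
  induction b with
  | zero => intro s m; simp
  | succ b ihb =>
    intro s m
    induction s with
    | zero =>
      have h1 : ∀ t ∈ range (b + 2),
          (m + t).choose t * (0 + (b + 1 - t)).choose (b + 1 - t) = (m + t).choose m := by
        intro t ht
        rw [Nat.zero_add, Nat.choose_self, mul_one]
        have h3 := Nat.choose_symm (n := m + t) (k := m) (Nat.le_add_right m t)
        rw [Nat.add_sub_cancel_left] at h3
        exact h3
      rw [Finset.sum_congr rfl h1, hockey m (b + 1)]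
      have h2 := Nat.choose_symm (n := m + (b + 1) + 1) (k := m + 1) (by omega)
      rw [show m + (b + 1) + 1 - (m + 1) = b + 1 from by omega] at h2
      rw [show m + 0 + (b + 1) + 1 = m + (b + 1) + 1 from by omega, h2]
    | succ s ihs =>
      rw [Finset.sum_range_succ]
      have hsplit : ∀ t ∈ range (b + 1),
          (m + t).choose t * ((s + 1) + (b + 1 - t)).choose (b + 1 - t)
            = (m + t).choose t * ((s + 1) + (b - t)).choose (b - t)
              + (m + t).choose t * (s + (b + 1 - t)).choose (b + 1 - t) := by
        intro t ht
        rw [mem_range] at ht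
        have e1 : b + 1 - t = (b - t) + 1 := by omega
        have e2 : s + 1 + ((b - t) + 1) = (s + 1 + (b - t)) + 1 := by omega
        have e3 : s + ((b - t) + 1) = s + 1 + (b - t) := by omega
        rw [e1, e2, e3, Nat.choose_succ_succ, Nat.mul_add]
      rw [Finset.sum_congr rfl hsplit, Finset.sum_add_distrib, ihb (s + 1) m]
      rw [Finset.sum_range_succ] at ihs
      have hlast : (m + (b + 1)).choose (b + 1) * ((s + 1) + (b + 1 - (b + 1))).choose (b + 1 - (b + 1))
          = (m + (b + 1)).choose (b + 1) * (s + (b + 1 - (b + 1))).choose (b + 1 - (b + 1)) := by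
        simp
      rw [hlast, add_assoc, ihs]
      rw [show m + (s + 1) + b + 1 = m + s + b + 2 from by omega,
        show m + s + (b + 1) + 1 = m + s + b + 2 from by omega,
        show m + (s + 1) + (b + 1) + 1 = m + s + b + 2 + 1 from by omega]
      exact (Nat.choose_succ_succ _ _).symm

lemma nat_id (s L b : ℕ) (hb : b < L) :
    ∑ t ∈ range (b + 1), (L - 1 - t).choose (b - t) * (s + t).choose s
      = (s + L).choose b := by
  have h := sym_id b s (L - 1 - b)
  rw [← Finset.sum_range_reflect] at h
  rw [show (s + L).choose b = ((L - 1 - b) + s + b + 1).choose b from by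
    rw [show (L - 1 - b) + s + b + 1 = s + L from by omega], ← h]
  apply Finset.sum_congr rfl
  intro t ht
  rw [mem_range] at ht
  rw [show b + 1 - 1 - t = b - t from by omega]
  rw [show b - (b - t) = t from by omega, show L - 1 - b + (b - t) = L - 1 - t from by omega]
  congr 1
  have h3 := Nat.choose_symm (n := s + t) (k := s) (Nat.le_add_right s t)
  rw [Nat.add_sub_cancel_left] at h3
  exact h3.symm


lemma card_sorted (L bb : ℕ) (h : bb ≤ L) :
    #(univ.filter fun i : Fin L => sortedBetaWord L bb i = true) = bb := by
  have h1 : (univ.filter fun i : Fin L => sortedBetaWord L bb i = true)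
      = univ.filter fun i : Fin L => L - bb ≤ (i : ℕ) := by
    apply filter_congr; intro i _; simp [sortedBetaWord]
  rw [h1, card_filter_le]; omega

end Stmt10Aux


/-- Abstract form of Lemma 5 of the paper. Fix `s ≥ 0`, `n > s`, `L = n - s`, and
`F : words of length L over {α,β} → ℚ≥0`. If (1) `F v = F (f v)` for all `v`, and
(2) for every `b ≤ L`, `∑_{v ∈ E_b} F v = C(n, b) · F(e⁽⁰⁾)`,
then `F(e⁽ᵇ⁾) = C(s + b, s) · F(e⁽⁰⁾)` for every `b ≤ L`. -/
theorem stmt_10 (s n : ℕ) (hsn : s < n) (F : (Fin (n - s) → Bool) → ℚ)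
    (hF0 : ∀ v, 0 ≤ F v)
    (h1 : ∀ v, F v = F (collapseNonTrailing v))
    (h2 : ∀ b ≤ n - s,
      ∑ v ∈ Finset.univ.filter
          (fun v : Fin (n - s) → Bool => (Finset.univ.filter (fun i => v i = true)).card = b),
        F v = (n.choose b : ℚ) * F (sortedBetaWord (n - s) 0)) :
    ∀ b ≤ n - s,
      F (sortedBetaWord (n - s) b) = ((s + b).choose s : ℚ) * F (sortedBetaWord (n - s) 0) := by
  have hgv : ∀ v : Fin (n - s) → Bool,
      F v = F (sortedBetaWord (n - s) (Stmt10Aux.tc v)) := by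
    intro v; rw [h1 v, Stmt10Aux.collapse_eq]
  intro b
  induction b using Nat.strong_induction_on with
  | _ b IH =>
    intro hb
    rcases eq_or_lt_of_le hb with hbe | hblt
    · -- b = n - s : the set E_b is a singleton
      have h2b := h2 b hb
      have hE : (Finset.univ.filter (fun v : Fin (n - s) → Bool =>
          (Finset.univ.filter (fun i => v i = true)).card = b))
          = {sortedBetaWord (n - s) b} := by
        ext v
        simp only [Finset.mem_filter, Finset.mem_univ, true_and, Finset.mem_singleton]
        constructor
        · intro hv
          have huniv : (Finset.univ.filter fun i : Fin (n - s) => v i = true)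
              = Finset.univ := by
            apply Finset.eq_univ_of_card
            rw [hv, Fintype.card_fin]; omega
          funext i
          have hi : v i = true := by
            have := Finset.eq_univ_iff_forall.mp huniv i
            simpa using this
          rw [hi]
          simp [sortedBetaWord, hbe]
        · rintro rfl
          exact Stmt10Aux.card_sorted (n - s) b hb
      rw [hE, Finset.sum_singleton] at h2b
      rw [h2b]
      have hcn : n.choose b = (s + b).choose s := by
        rw [hbe, show s + (n - s) = n from by omega]
        exact Nat.choose_symm (by omega)
      rw [hcn]
    · -- b < n - s
      have h2b := h2 b (le_of_lt hblt)
      have hmaps : ∀ v ∈ (Finset.univ.filter (fun v : Fin (n - s) → Bool =>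
          (Finset.univ.filter (fun i => v i = true)).card = b)),
          Stmt10Aux.tc v ∈ Finset.range (b + 1) := by
        intro v hv
        simp only [Finset.mem_filter, Finset.mem_univ, true_and] at hv
        rw [Finset.mem_range]
        have := Stmt10Aux.tc_le_card v
        omega
      rw [← Finset.sum_fiberwise_of_maps_to hmaps F] at h2b
      have hinner : ∀ t ∈ Finset.range (b + 1),
          ∑ v ∈ (Finset.univ.filter (fun v : Fin (n - s) → Bool =>
              (Finset.univ.filter (fun i => v i = true)).card = b)).filter
                (fun v => Stmt10Aux.tc v = t),
            F v
          = ((n - s - 1 - t).choose (b - t) : ℚ) * F (sortedBetaWord (n - s) t) := by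
        intro t ht
        rw [Finset.mem_range] at ht
        have hterm : ∀ v ∈ (Finset.univ.filter (fun v : Fin (n - s) → Bool =>
            (Finset.univ.filter (fun i => v i = true)).card = b)).filter
              (fun v => Stmt10Aux.tc v = t),
            F v = F (sortedBetaWord (n - s) t) := by
          intro v hv
          simp only [Finset.mem_filter] at hv
          rw [hgv v, hv.2]
        rw [Finset.sum_congr rfl hterm, Finset.sum_const, Finset.filter_filter,
          Stmt10Aux.card_fiber b t (by omega) hblt, nsmul_eq_mul]
      rw [Finset.sum_congr rfl hinner, Finset.sum_range_succ] at h2b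
      have hIH : ∀ t ∈ Finset.range b,
          ((n - s - 1 - t).choose (b - t) : ℚ) * F (sortedBetaWord (n - s) t)
            = ((n - s - 1 - t).choose (b - t) : ℚ) * ((s + t).choose s : ℚ)
                * F (sortedBetaWord (n - s) 0) := by
        intro t ht
        rw [Finset.mem_range] at ht
        rw [IH t ht (by omega)]
        ring
      rw [Finset.sum_congr rfl hIH, ← Finset.sum_mul] at h2b
      have hone : ((n - s - 1 - b).choose (b - b) : ℚ) = 1 := by
        rw [Nat.sub_self, Nat.choose_zero_right, Nat.cast_one]
      rw [hone, one_mul] at h2b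
      have hidq : (∑ t ∈ Finset.range b,
            ((n - s - 1 - t).choose (b - t) : ℚ) * ((s + t).choose s : ℚ))
          + ((s + b).choose s : ℚ) = (n.choose b : ℚ) := by
        have hnat := Stmt10Aux.nat_id s (n - s) b hblt
        rw [Finset.sum_range_succ, Nat.sub_self, Nat.choose_zero_right, one_mul,
          show s + (n - s) = n from by omega] at hnat
        exact_mod_cast hnat
      linear_combination h2b - F (sortedBetaWord (n - s) 0) * hidq
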